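/- Fix d ≥ 1 and α ∈ (0,2). There exists C = C(d,α) > 0 such that for all n ≥ 1 and all w ∈ ℤ^d with 0 < ‖w‖_∞ ≤ n/2, we have 1/(n^α λ_w^{(α,n)})² ≤ C / ‖w‖^{2α}. -/

import Mathlib

open Real

noncomputable def znorm (d : ℕ) (z : Fin d → ℤ) : ℝ :=
  Real.sqrt (∑ i, ((z i : ℝ)) ^ 2)

/-- `c^{(α)} = (∑_{z ∈ ℤ^d \ {0}} ‖z‖^{-(d+α)})⁻¹`. -/
noncomputable def cAlpha (d : ℕ) (α : ℝ) : ℝ :=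
  (∑' z : {z : Fin d → ℤ // z ≠ 0}, znorm d z.1 ^ (-((d : ℝ) + α)))⁻¹

/-- `λ_w^{(α,n)} = c^{(α)} ∑_{y ∈ ℤ^d \ {0}} sin²(π y·w/n)/‖y‖^{d+α}`. -/
noncomputable def lamEig (d : ℕ) (α : ℝ) (n : ℕ) (w : Fin d → ℤ) : ℝ :=
  cAlpha d α *
    ∑' y : {y : Fin d → ℤ // y ≠ 0},
      Real.sin (π * (∑ i, (y.1 i : ℝ) * (w i : ℝ)) / n) ^ 2 /
        znorm d y.1 ^ ((d : ℝ) + α)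

lemma znorm_nonneg (d : ℕ) (z : Fin d → ℤ) : 0 ≤ znorm d z := Real.sqrt_nonneg _

lemma abs_le_znorm (d : ℕ) (z : Fin d → ℤ) (i : Fin d) : |(z i : ℝ)| ≤ znorm d z := by
  rw [← Real.sqrt_sq_eq_abs]
  exact Real.sqrt_le_sqrt (Finset.single_le_sum (fun j _ => sq_nonneg ((z j : ℝ))) (Finset.mem_univ i))

lemma one_le_znorm {d : ℕ} {z : Fin d → ℤ} (hz : z ≠ 0) : 1 ≤ znorm d z := by
  obtain ⟨i, hi⟩ := Function.ne_iff.mp hz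
  have h1 : (1 : ℝ) ≤ |(z i : ℝ)| := by
    rw [← Int.cast_abs]
    exact_mod_cast Int.one_le_abs (by simpa using hi)
  exact h1.trans (abs_le_znorm d z i)

lemma znorm_pos {d : ℕ} {z : Fin d → ℤ} (hz : z ≠ 0) : 0 < znorm d z :=
  lt_of_lt_of_le one_pos (one_le_znorm hz)

lemma znorm_le {d : ℕ} (z : Fin d → ℤ) {M : ℝ} (hM : 0 ≤ M)
    (h : ∀ i, |(z i : ℝ)| ≤ M) : znorm d z ≤ Real.sqrt d * M := by
  have : (∑ i, ((z i : ℝ)) ^ 2) ≤ (d : ℝ) * M ^ 2 := by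
    calc (∑ i, ((z i : ℝ)) ^ 2) ≤ ∑ _i : Fin d, M ^ 2 := by
          refine Finset.sum_le_sum fun i _ => ?_
          rw [← sq_abs]
          exact pow_le_pow_left₀ (abs_nonneg _) (h i) 2
      _ = (d : ℝ) * M ^ 2 := by simp [mul_comm]
  calc znorm d z ≤ Real.sqrt ((d : ℝ) * M ^ 2) := Real.sqrt_le_sqrt this
    _ = Real.sqrt d * M := by
        rw [Real.sqrt_mul (Nat.cast_nonneg d), Real.sqrt_sq hM]

lemma rpow_le_rpow_neg {x y p : ℝ} (hx : 0 < x) (hxy : x ≤ y) (hp : 0 ≤ p) :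
    y ^ (-p) ≤ x ^ (-p) := by
  rw [Real.rpow_neg hx.le, Real.rpow_neg (hx.trans_le hxy).le]
  exact inv_anti₀ (Real.rpow_pos_of_pos hx p) (Real.rpow_le_rpow hx.le hxy hp)

lemma summable_pi_prod {g : ℤ → ℝ} (hg0 : ∀ k, 0 ≤ g k) (hg : Summable g) :
    ∀ d : ℕ, Summable (fun z : Fin d → ℤ => ∏ i, g (z i)) := by
  intro d
  induction d with
  | zero => exact Summable.of_finite
  | succ d ih =>
    have h2 : Summable (fun q : ℤ × (Fin d → ℤ) => g q.1 * ∏ i, g (q.2 i)) := by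
      have := Summable.mul_of_nonneg (f := g) (g := fun z : Fin d → ℤ => ∏ i, g (z i))
        hg ih hg0 (fun z => Finset.prod_nonneg fun i _ => hg0 _)
      exact this
    have h3 : Summable ((fun q : ℤ × (Fin d → ℤ) => g q.1 * ∏ i, g (q.2 i)) ∘
        (Fin.consEquiv (fun _ : Fin (d + 1) => ℤ)).symm) :=
      (Fin.consEquiv (fun _ : Fin (d + 1) => ℤ)).symm.summable_iff.mpr h2
    refine h3.congr fun z => ?_
    rw [Fin.prod_univ_succ]
    rfl

lemma summable_one_add_abs {q : ℝ} (hq : 1 < q) :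
    Summable (fun m : ℤ => (1 + |(m : ℝ)|) ^ (-q)) := by
  have hnat : Summable (fun n : ℕ => ((n : ℝ) + 1) ^ (-q)) := by
    have := (Real.summable_nat_rpow (p := -q)).2 (by linarith)
    have h2 := (summable_nat_add_iff (f := fun n : ℕ => ((n : ℝ)) ^ (-q)) 1).2 this
    exact h2.congr fun n => by push_cast; ring_nf
  refine Summable.of_nat_of_neg (hnat.congr fun n => ?_) (hnat.congr fun n => ?_)
  · congr 1
    push_cast
    rw [abs_of_nonneg (Nat.cast_nonneg n)]
    ring
  · congr 1
    push_cast
    rw [abs_neg, abs_of_nonneg (Nat.cast_nonneg n)]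
    ring

lemma znorm_rpow_le_prod {d : ℕ} (hd : 1 ≤ d) {α : ℝ} (hα : 0 < α)
    {z : Fin d → ℤ} (hz : z ≠ 0) :
    znorm d z ^ (-((d : ℝ) + α)) ≤
      2 ^ ((d : ℝ) + α) * ∏ i, (1 + |(z i : ℝ)|) ^ (-(1 + α / d)) := by
  have hdR : (0 : ℝ) < d := by exact_mod_cast hd
  set p : ℝ := (d : ℝ) + α with hp
  set q : ℝ := 1 + α / d with hq
  have hdq : (d : ℝ) * q = p := by
    rw [hq, hp, mul_add, mul_one, mul_div_assoc', mul_div_cancel_left₀ α hdR.ne']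
  obtain ⟨i₀, _, hmax⟩ := Finset.exists_max_image Finset.univ
    (fun i => |(z i : ℝ)|) (Finset.univ_nonempty_iff.mpr ⟨⟨0, hd⟩⟩)
  set M : ℝ := |(z i₀ : ℝ)| with hM
  have hM1 : 1 ≤ M := by
    obtain ⟨j, hj⟩ := Function.ne_iff.mp hz
    have : (1 : ℝ) ≤ |(z j : ℝ)| := by
      rw [← Int.cast_abs]; exact_mod_cast Int.one_le_abs (by simpa using hj)
    exact this.trans (hmax j (Finset.mem_univ j))
  have hM0 : 0 < M := lt_of_lt_of_le one_pos hM1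
  have h1 : znorm d z ^ (-p) ≤ M ^ (-p) :=
    rpow_le_rpow_neg hM0 (abs_le_znorm d z i₀) (by positivity)
  have hprod_pos : (0 : ℝ) < ∏ i, (1 + |(z i : ℝ)|) := by positivity
  have h2 : (∏ i, (1 + |(z i : ℝ)|)) ≤ (2 * M) ^ (d : ℕ) := by
    calc (∏ i, (1 + |(z i : ℝ)|)) ≤ ∏ _i : Fin d, (2 * M) := by
          refine Finset.prod_le_prod (fun i _ => by positivity) fun i _ => ?_
          have := hmax i (Finset.mem_univ i)
          linarith
      _ = (2 * M) ^ (d : ℕ) := by simp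
  have h3 : ∏ i, (1 + |(z i : ℝ)|) ^ (-q) = (∏ i, (1 + |(z i : ℝ)|)) ^ (-q) :=
    Real.finset_prod_rpow _ _ (fun i _ => by positivity) _
  have h4 : ((2 * M) ^ (d : ℕ) : ℝ) ^ (-q) ≤ (∏ i, (1 + |(z i : ℝ)|)) ^ (-q) :=
    rpow_le_rpow_neg hprod_pos h2 (by positivity)
  have h5 : ((2 * M) ^ (d : ℕ) : ℝ) ^ (-q) = (2 * M) ^ (-p) := by
    rw [← Real.rpow_natCast (2 * M) d, ← Real.rpow_mul (by positivity)]
    rw [← hdq]; ring_nf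
  have h6 : 2 ^ p * (2 * M) ^ (-p) = M ^ (-p) := by
    rw [Real.mul_rpow (by norm_num) hM0.le, ← mul_assoc,
      ← Real.rpow_add (by norm_num : (0:ℝ) < 2)]
    simp
  calc znorm d z ^ (-p) ≤ M ^ (-p) := h1
    _ = 2 ^ p * (2 * M) ^ (-p) := h6.symm
    _ ≤ 2 ^ p * (∏ i, (1 + |(z i : ℝ)|)) ^ (-q) := by
        have := h5 ▸ h4
        nlinarith [Real.rpow_pos_of_pos (show (0:ℝ) < 2 by norm_num) p]
    _ = 2 ^ p * ∏ i, (1 + |(z i : ℝ)|) ^ (-q) := by rw [h3]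

lemma summable_znorm {d : ℕ} (hd : 1 ≤ d) {α : ℝ} (hα : 0 < α) :
    Summable (fun z : {z : Fin d → ℤ // z ≠ 0} => znorm d z.1 ^ (-((d : ℝ) + α))) := by
  have hdR : (0 : ℝ) < d := by exact_mod_cast hd
  have hq : 1 < 1 + α / d := by
    have : 0 < α / d := by positivity
    linarith
  have hs : Summable (fun z : Fin d → ℤ =>
      2 ^ ((d : ℝ) + α) * ∏ i, (1 + |(z i : ℝ)|) ^ (-(1 + α / d))) :=
    (summable_pi_prod (fun k => by positivity) (summable_one_add_abs hq) d).mul_left _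
  refine Summable.of_nonneg_of_le (fun z => Real.rpow_nonneg (znorm_nonneg d z.1) _)
    (fun z => znorm_rpow_le_prod hd hα z.2) (hs.subtype _)

lemma cAlpha_pos {d : ℕ} (hd : 1 ≤ d) {α : ℝ} (hα : 0 < α) : 0 < cAlpha d α := by
  rw [cAlpha, inv_pos]
  have hone : ((fun _ => 1 : Fin d → ℤ)) ≠ 0 := by
    intro h
    have := congrFun h ⟨0, hd⟩
    simp at this
  refine Summable.tsum_pos (summable_znorm hd hα)
    (fun z => Real.rpow_nonneg (znorm_nonneg d z.1) _) ⟨_, hone⟩ ?_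
  exact Real.rpow_pos_of_pos (znorm_pos hone) _

lemma sin_pi_eighth_le {x : ℝ} (h1 : 1/8 ≤ x) (h2 : x ≤ 7/8) :
    Real.sin (π/8) ≤ Real.sin (π * x) := by
  have hπ := Real.pi_pos
  rcases le_or_gt x (1/2) with hx | hx
  · refine (Real.strictMonoOn_sin.monotoneOn ?_ ?_ ?_)
    · constructor <;> nlinarith
    · constructor <;> nlinarith
    · nlinarith
  · have : Real.sin (π * x) = Real.sin (π * (1 - x)) := by
      rw [show π * (1 - x) = π - π * x by ring, Real.sin_pi_sub]
    rw [this]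
    refine (Real.strictMonoOn_sin.monotoneOn ?_ ?_ ?_)
    · constructor <;> nlinarith
    · constructor <;> nlinarith
    · nlinarith

lemma sin_sq_periodic (t : ℝ) (r : ℤ) :
    Real.sin (π * (t - r)) ^ 2 = Real.sin (π * t) ^ 2 := by
  have : π * t = π * (t - r) + r * π := by ring
  rw [this, Real.sin_add_int_mul_pi, mul_pow]
  have : ((-1 : ℝ) ^ r) ^ 2 = 1 := by
    rcases Int.even_or_odd r with he | ho
    · rw [he.neg_one_zpow]; norm_num
    · rw [Odd.neg_one_zpow ho]; norm_num
  rw [this, one_mul]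

lemma sin_sq_pair_bound {t u : ℝ} (h1 : 1/4 < u) (h2 : u ≤ 1/2) :
    Real.sin (π/8) ^ 2 ≤ Real.sin (π * t) ^ 2 + Real.sin (π * (t + u)) ^ 2 := by
  have hπ := Real.pi_pos
  have hs8 : 0 ≤ Real.sin (π/8) := Real.sin_nonneg_of_nonneg_of_le_pi (by linarith) (by linarith)
  set r : ℤ := round t with hr
  set δ : ℝ := t - r with hδdef
  have hδ : |δ| ≤ 1/2 := abs_sub_round t
  have habs : ∀ a : ℝ, Real.sin (π * |a|) ^ 2 = Real.sin (π * a) ^ 2 := by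
    intro a
    rcases abs_cases a with ⟨h, _⟩ | ⟨h, _⟩ <;> rw [h]
    · rw [mul_neg, Real.sin_neg, neg_sq]
  rcases le_or_gt (1/8) |δ| with h | h
  · have hle : Real.sin (π/8) ≤ Real.sin (π * |δ|) :=
      sin_pi_eighth_le h (by linarith)
    have : Real.sin (π/8) ^ 2 ≤ Real.sin (π * t) ^ 2 := by
      calc Real.sin (π/8) ^ 2 ≤ Real.sin (π * |δ|) ^ 2 := pow_le_pow_left₀ hs8 hle 2
        _ = Real.sin (π * δ) ^ 2 := habs δ
        _ = Real.sin (π * t) ^ 2 := by rw [hδdef]; exact sin_sq_periodic t r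
    nlinarith [sq_nonneg (Real.sin (π * (t + u)))]
  · have hx1 : 1/8 ≤ δ + u := by
      rcases abs_lt.mp h with ⟨ha, _⟩; linarith
    have hx2 : δ + u ≤ 7/8 := by
      rcases abs_lt.mp h with ⟨_, hb⟩; linarith
    have hle : Real.sin (π/8) ≤ Real.sin (π * (δ + u)) := sin_pi_eighth_le hx1 hx2
    have key : Real.sin (π * (δ + u)) ^ 2 = Real.sin (π * (t + u)) ^ 2 := by
      have : δ + u = (t + u) - r := by rw [hδdef]; ring
      rw [this, sin_sq_periodic (t + u) r]
    have : Real.sin (π/8) ^ 2 ≤ Real.sin (π * (t + u)) ^ 2 := by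
      rw [← key]
      exact pow_le_pow_left₀ hs8 hle 2
    nlinarith [sq_nonneg (Real.sin (π * t))]

theorem stmt6 (d : ℕ) (hd : 1 ≤ d) (α : ℝ) (hα : α ∈ Set.Ioo (0:ℝ) 2) :
    ∃ C : ℝ, 0 < C ∧ ∀ n : ℕ, 1 ≤ n → ∀ w : Fin d → ℤ, w ≠ 0 →
      (∀ i, (|w i| : ℝ) ≤ n / 2) →
      1 / ((n : ℝ) ^ α * lamEig d α n w) ^ 2 ≤ C / znorm d w ^ (2 * α) := by
  obtain ⟨hα0, hα2⟩ := hα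
  have hπ := Real.pi_pos
  set p : ℝ := (d : ℝ) + α with hp
  have hp0 : 0 < p := by rw [hp]; positivity
  have hdR : (0:ℝ) < d := by exact_mod_cast hd
  have hsd : 0 < Real.sqrt d := Real.sqrt_pos.mpr hdR
  have hcA := cAlpha_pos hd hα0
  have hs8 : 0 < Real.sin (π/8) :=
    Real.sin_pos_of_pos_of_lt_pi (by positivity) (by linarith)
  set c₀ : ℝ := cAlpha d α * Real.sin (π/8)^2 * (Real.sqrt d * 3) ^ (-p) *
    (Real.sqrt d) ^ (-α) with hc₀
  have hc₀0 : 0 < c₀ := by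
    have h1 : (0:ℝ) < (Real.sqrt d * 3) ^ (-p) := Real.rpow_pos_of_pos (by positivity) _
    have h2 : (0:ℝ) < (Real.sqrt d) ^ (-α) := Real.rpow_pos_of_pos hsd _
    positivity
  refine ⟨1 / c₀^2, by positivity, ?_⟩
  intro n hn w hw hwbound
  have hn0 : (0:ℝ) < n := by exact_mod_cast hn
  obtain ⟨i₀, -, hmax⟩ := Finset.exists_max_image Finset.univ (fun i => |w i|)
    (Finset.univ_nonempty_iff.mpr ⟨⟨0, hd⟩⟩)
  set M : ℤ := |w i₀| with hM
  have hM1 : 1 ≤ M := by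
    obtain ⟨j, hj⟩ := Function.ne_iff.mp hw
    have : 1 ≤ |w j| := Int.one_le_abs (by simpa using hj)
    exact this.trans (hmax j (Finset.mem_univ j))
  have hMR : (0:ℝ) < (M:ℝ) := by exact_mod_cast hM1
  have hMn : (M:ℝ) ≤ (n:ℝ) / 2 := by
    have := hwbound i₀
    exact_mod_cast this
  set k : ℕ := ⌊(n:ℝ) / (2*M)⌋₊ with hk
  have hk1 : 1 ≤ k := by
    apply Nat.le_floor
    rw [le_div_iff₀ (by positivity)]
    push_cast
    linarith
  have hkR : (0:ℝ) < k := by exact_mod_cast hk1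
  have hkle : (k:ℝ) ≤ (n:ℝ)/(2*M) := Nat.floor_le (by positivity)
  have hu1 : ((k:ℝ)*(M:ℝ))/n ≤ 1/2 := by
    rw [div_le_iff₀ hn0]
    have := (le_div_iff₀ (by positivity : (0:ℝ) < 2*M)).mp hkle
    linarith
  have hu2 : 1/4 < ((k:ℝ)*(M:ℝ))/n := by
    rcases le_or_gt ((M:ℝ)/n) (1/4) with hc | hc
    · have h1 : (n:ℝ)/(2*M) < k + 1 := Nat.lt_floor_add_one _
      rw [lt_div_iff₀ hn0]
      rw [div_lt_iff₀ (by positivity : (0:ℝ) < 2*M)] at h1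
      rw [div_le_iff₀ hn0] at hc
      nlinarith
    · have hklt : k < 2 := by
        rw [hk, Nat.floor_lt (by positivity), div_lt_iff₀ (by positivity : (0:ℝ) < 2*M)]
        rw [lt_div_iff₀ hn0] at hc
        push_cast
        nlinarith
      have : k = 1 := by omega
      rw [this]
      rw [lt_div_iff₀ hn0] at hc ⊢
      push_cast
      linarith
  -- sign
  set σ : ℤ := if 0 ≤ w i₀ then 1 else -1 with hσdef
  have hσ : σ * w i₀ = M := by
    rw [hσdef, hM]
    split_ifs with h
    · rw [one_mul, abs_of_nonneg h]
    · rw [neg_one_mul, abs_of_neg (lt_of_not_ge h)]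
  have hσ1 : σ = 1 ∨ σ = -1 := by
    rw [hσdef]; split_ifs <;> simp
  classical
  set B : Finset (Fin d → ℤ) :=
    Fintype.piFinset (fun _ => Finset.Icc ((k:ℤ)+1) (2*(k:ℤ))) with hBdef
  have hcard : B.card = k ^ d := by
    rw [hBdef, Fintype.card_piFinset]
    have : (Finset.Icc ((k:ℤ)+1) (2*(k:ℤ))).card = k := by
      rw [Int.card_Icc]
      omega
    simp [this]
  set φ : (Fin d → ℤ) → (Fin d → ℤ) :=
    fun y => Function.update y i₀ (y i₀ + σ * (k:ℤ)) with hφdef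
  have hmemB : ∀ y ∈ B, ∀ i, (k:ℤ)+1 ≤ y i ∧ y i ≤ 2*(k:ℤ) := by
    intro y hy i
    exact Finset.mem_Icc.mp (Fintype.mem_piFinset.mp hy i)
  have hφeq : ∀ y : Fin d → ℤ, φ y i₀ = y i₀ + σ * (k:ℤ) := by
    intro y; rw [hφdef]; simp
  have hφne : ∀ (y : Fin d → ℤ) i, i ≠ i₀ → φ y i = y i := by
    intro y i hi; rw [hφdef]; simp [Function.update_of_ne hi]
  have hφbd : ∀ y ∈ B, ∀ i, 1 ≤ φ y i ∧ φ y i ≤ 3*(k:ℤ) := by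
    intro y hy i
    by_cases hi : i = i₀
    · subst hi
      rw [hφeq]
      have := hmemB y hy i
      rcases hσ1 with h | h <;> rw [h] <;> omega
    · rw [hφne y i hi]
      have := hmemB y hy i
      omega
  have hyB0 : ∀ y ∈ B, y ≠ 0 := by
    intro y hy h0
    have := (hmemB y hy i₀).1
    rw [h0] at this
    simp at this
    omega
  have hφ0 : ∀ y ∈ B, φ y ≠ 0 := by
    intro y hy h0
    have := (hφbd y hy i₀).1
    rw [h0] at this
    simp at this
  -- the summand
  set f : (Fin d → ℤ) → ℝ :=
    fun y => Real.sin (π * (∑ i, (y i : ℝ) * (w i : ℝ)) / n) ^ 2 / znorm d y ^ p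
    with hfdef
  have hlamEq : lamEig d α n w = cAlpha d α * ∑' y : {y : Fin d → ℤ // y ≠ 0}, f y.1 := rfl
  have hfnn : ∀ y : Fin d → ℤ, 0 ≤ f y := by
    intro y
    exact div_nonneg (sq_nonneg _) (Real.rpow_nonneg (znorm_nonneg d y) _)
  have hFsum : Summable (fun y : {y : Fin d → ℤ // y ≠ 0} => f y.1) := by
    refine Summable.of_nonneg_of_le (fun y => hfnn y.1) (fun y => ?_) (summable_znorm hd hα0)
    have hZp : 0 < znorm d y.1 ^ p := Real.rpow_pos_of_pos (znorm_pos y.2) p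
    calc f y.1 ≤ 1 / znorm d y.1 ^ p := by
          rw [hfdef]
          exact (div_le_div_iff_of_pos_right hZp).mpr (Real.sin_sq_le_one _)
      _ = znorm d y.1 ^ (-p) := by
          rw [Real.rpow_neg (znorm_nonneg d y.1), one_div]
  set D : ℝ := (Real.sqrt d * (3*(k:ℝ))) ^ p with hDdef
  have hD0 : 0 < D := Real.rpow_pos_of_pos (by positivity) p
  -- per-pair bound
  have h4 : ∀ y ∈ B, Real.sin (π/8) ^ 2 / D ≤ f y + f (φ y) := by
    intro y hy
    have hy3 : ∀ i, |(y i : ℝ)| ≤ 3*(k:ℝ) := by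
      intro i
      have hb := hmemB y hy i
      rw [← Int.cast_abs]
      have : |y i| ≤ 3*(k:ℤ) := abs_le.mpr ⟨by omega, by omega⟩
      exact_mod_cast this
    have hφ3 : ∀ i, |(φ y i : ℝ)| ≤ 3*(k:ℝ) := by
      intro i
      have hb := hφbd y hy i
      rw [← Int.cast_abs]
      have : |φ y i| ≤ 3*(k:ℤ) := abs_le.mpr ⟨by omega, by omega⟩
      exact_mod_cast this
    have hZy : znorm d y ≤ Real.sqrt d * (3*(k:ℝ)) := znorm_le y (by positivity) hy3
    have hZφ : znorm d (φ y) ≤ Real.sqrt d * (3*(k:ℝ)) := znorm_le (φ y) (by positivity) hφ3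
    have hy0 := hyB0 y hy
    have hφy0 := hφ0 y hy
    -- the sum shift identity
    have hsum' : (∑ i, ((φ y) i : ℝ) * (w i : ℝ))
        = (∑ i, (y i : ℝ) * (w i : ℝ)) + (k:ℝ)*(M:ℝ) := by
      have hterm : ∀ j, ((φ y) j : ℝ) * (w j : ℝ)
          = (y j : ℝ) * (w j : ℝ) + (if j = i₀ then (k:ℝ)*(M:ℝ) else 0) := by
        intro j
        by_cases hj : j = i₀
        · rw [hj, hφeq, if_pos rfl]
          have hcast : (σ:ℝ) * (w i₀ : ℝ) = (M:ℝ) := by exact_mod_cast congrArg Int.cast hσ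
          push_cast
          linear_combination (k:ℝ) * hcast
        · rw [hφne y j hj, if_neg hj, add_zero]
      rw [Finset.sum_congr rfl (fun i _ => hterm i), Finset.sum_add_distrib,
        Finset.sum_ite_eq' Finset.univ i₀]
      simp
    -- trig pair bound
    set S : ℝ := ∑ i, (y i : ℝ) * (w i : ℝ) with hSdef
    have hpair : Real.sin (π/8) ^ 2
        ≤ Real.sin (π * (S/n)) ^ 2 + Real.sin (π * (S/n + (k:ℝ)*(M:ℝ)/n)) ^ 2 :=
      sin_sq_pair_bound hu2 hu1
    have e1 : π * S / n = π * (S/n) := by ring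
    have e2 : π * (∑ i, ((φ y) i : ℝ) * (w i : ℝ)) / n = π * (S/n + (k:ℝ)*(M:ℝ)/n) := by
      rw [hsum']
      ring
    have hZyp : znorm d y ^ p ≤ D := Real.rpow_le_rpow (znorm_nonneg d y) hZy hp0.le
    have hZφp : znorm d (φ y) ^ p ≤ D := Real.rpow_le_rpow (znorm_nonneg d (φ y)) hZφ hp0.le
    have hZyp0 : 0 < znorm d y ^ p := Real.rpow_pos_of_pos (znorm_pos hy0) p
    have hZφp0 : 0 < znorm d (φ y) ^ p := Real.rpow_pos_of_pos (znorm_pos hφy0) p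
    calc Real.sin (π/8) ^ 2 / D
        ≤ (Real.sin (π * (S/n)) ^ 2 + Real.sin (π * (S/n + (k:ℝ)*(M:ℝ)/n)) ^ 2) / D :=
          (div_le_div_iff_of_pos_right hD0).mpr hpair
      _ = Real.sin (π * (S/n)) ^ 2 / D + Real.sin (π * (S/n + (k:ℝ)*(M:ℝ)/n)) ^ 2 / D :=
          add_div _ _ _
      _ ≤ f y + f (φ y) := by
          refine add_le_add ?_ ?_
          · rw [hfdef]
            simp only
            rw [e1]
            exact div_le_div_of_nonneg_left (sq_nonneg _) hZyp0 hZyp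
          · rw [hfdef]
            simp only
            rw [e2]
            exact div_le_div_of_nonneg_left (sq_nonneg _) hZφp0 hZφp
  -- disjointness and injectivity
  have hdisj : Disjoint B (B.image φ) := by
    rw [Finset.disjoint_left]
    intro a ha hb
    obtain ⟨y', hy', rfl⟩ := Finset.mem_image.mp hb
    have hA := hmemB _ ha i₀
    have hY := hmemB y' hy' i₀
    have heq := hφeq y'
    rcases hσ1 with h | h <;> rw [h] at heq <;> omega
  have hinj : ∀ x ∈ B, ∀ y ∈ B, φ x = φ y → x = y := by
    intro x hx y hy h
    funext i
    have hi := congrFun h i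
    by_cases hj : i = i₀
    · rw [hj] at hi ⊢
      rw [hφeq, hφeq] at hi
      omega
    · rw [hφne x i hj, hφne y i hj] at hi
      exact hi
  have hall0 : ∀ y ∈ B ∪ B.image φ, y ≠ 0 := by
    intro y hy
    rcases Finset.mem_union.mp hy with h | h
    · exact hyB0 y h
    · obtain ⟨y', hy', rfl⟩ := Finset.mem_image.mp h
      exact hφ0 y' hy'
  set s : Finset {y : Fin d → ℤ // y ≠ 0} :=
    (B ∪ B.image φ).subtype (fun y => y ≠ 0) with hsdef
  have hsum_s : ∑ x ∈ s, f x.1 = ∑ y ∈ B ∪ B.image φ, f y := by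
    rw [hsdef, Finset.sum_subtype_eq_sum_filter]
    congr 1
    exact Finset.filter_true_of_mem hall0
  have hcount : (k:ℝ)^(d:ℕ) * (Real.sin (π/8)^2 / D)
      ≤ ∑' (y : {y : Fin d → ℤ // y ≠ 0}), f y.1 := by
    have c1 : ∑ x ∈ s, f x.1 ≤ ∑' (y : {y : Fin d → ℤ // y ≠ 0}), f y.1 :=
      hFsum.sum_le_tsum s (fun b _ => hfnn b.1)
    have c2 : ∑ y ∈ B ∪ B.image φ, f y = ∑ y ∈ B, (f y + f (φ y)) := by
      rw [Finset.sum_union hdisj, Finset.sum_image hinj, ← Finset.sum_add_distrib]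
    have c3 : (B.card : ℝ) * (Real.sin (π/8)^2 / D) ≤ ∑ y ∈ B, (f y + f (φ y)) := by
      calc (B.card : ℝ) * (Real.sin (π/8)^2 / D)
          = ∑ _y ∈ B, (Real.sin (π/8)^2 / D) := by rw [Finset.sum_const, nsmul_eq_mul]
        _ ≤ ∑ y ∈ B, (f y + f (φ y)) := Finset.sum_le_sum h4
    have c4 : (B.card : ℝ) = (k:ℝ)^(d:ℕ) := by rw [hcard]; push_cast; ring
    calc (k:ℝ)^(d:ℕ) * (Real.sin (π/8)^2 / D)
        = (B.card:ℝ) * (Real.sin (π/8)^2 / D) := by rw [c4]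
      _ ≤ ∑ y ∈ B, (f y + f (φ y)) := c3
      _ = ∑ y ∈ B ∪ B.image φ, f y := c2.symm
      _ = ∑ x ∈ s, f x.1 := hsum_s.symm
      _ ≤ _ := c1
  -- lower bound for lamEig
  have hlam : cAlpha d α * (Real.sin (π/8)^2 * (Real.sqrt d * 3)^(-p) * (k:ℝ)^(-α))
      ≤ lamEig d α n w := by
    rw [hlamEq]
    have h1 : D = (Real.sqrt d * 3)^p * (k:ℝ)^p := by
      rw [hDdef, show Real.sqrt d * (3*(k:ℝ)) = (Real.sqrt d * 3) * (k:ℝ) by ring,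
        Real.mul_rpow (by positivity) hkR.le]
    have h2 : (k:ℝ)^p = (k:ℝ)^(d:ℕ) * (k:ℝ)^α := by
      rw [← Real.rpow_natCast (k:ℝ) d, ← Real.rpow_add hkR, hp]
    have hne1 : ((Real.sqrt d * 3 : ℝ))^p ≠ 0 :=
      ne_of_gt (Real.rpow_pos_of_pos (by positivity) _)
    have hne2 : ((k:ℝ))^α ≠ 0 := ne_of_gt (Real.rpow_pos_of_pos hkR _)
    have hne3 : ((k:ℝ))^(d:ℕ) ≠ 0 := by positivity
    have key : (k:ℝ)^(d:ℕ) * (Real.sin (π/8)^2 / D)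
        = Real.sin (π/8)^2 * (Real.sqrt d * 3)^(-p) * (k:ℝ)^(-α) := by
      rw [h1, h2, Real.rpow_neg (by positivity : (0:ℝ) ≤ Real.sqrt d * 3),
        Real.rpow_neg hkR.le]
      field_simp
    rw [← key]
    exact mul_le_mul_of_nonneg_left hcount hcA.le
  -- final chain
  set Z := znorm d w with hZdef
  have hZ0 : 0 < Z := znorm_pos hw
  have hZd : Z ≤ Real.sqrt d * (M:ℝ) := by
    apply znorm_le w hMR.le
    intro i
    rw [← Int.cast_abs]
    exact_mod_cast hmax i (Finset.mem_univ i)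
  have hnk : 2*(M:ℝ) ≤ (n:ℝ)/(k:ℝ) := by
    rw [le_div_iff₀ hkR]
    have := (le_div_iff₀ (by positivity : (0:ℝ) < 2*(M:ℝ))).mp hkle
    linarith
  have hZnk : Z / Real.sqrt d ≤ (n:ℝ)/(k:ℝ) := by
    have h1 : Z / Real.sqrt d ≤ (M:ℝ) := by
      rw [div_le_iff₀ hsd]
      linarith [hZd]
    linarith
  have hA0 : 0 < cAlpha d α * Real.sin (π/8)^2 * (Real.sqrt d * 3)^(-p) := by
    have := Real.rpow_pos_of_pos (show (0:ℝ) < Real.sqrt d * 3 by positivity) (-p)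
    positivity
  have hmain : c₀ * Z ^ α ≤ (n:ℝ)^α * lamEig d α n w := by
    have e3 : (Real.sqrt d)^(-α) * Z^α = (Z / Real.sqrt d)^α := by
      rw [Real.div_rpow hZ0.le hsd.le, Real.rpow_neg hsd.le]
      ring
    have e4 : ((n:ℝ)/(k:ℝ))^α = (n:ℝ)^α * (k:ℝ)^(-α) := by
      rw [Real.div_rpow hn0.le hkR.le, Real.rpow_neg hkR.le]
      ring
    have hstep : (Z / Real.sqrt d)^α ≤ ((n:ℝ)/(k:ℝ))^α :=
      Real.rpow_le_rpow (by positivity) hZnk hα0.le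
    calc c₀ * Z^α
        = (cAlpha d α * Real.sin (π/8)^2 * (Real.sqrt d * 3)^(-p))
            * ((Real.sqrt d)^(-α) * Z^α) := by rw [hc₀]; ring
      _ = (cAlpha d α * Real.sin (π/8)^2 * (Real.sqrt d * 3)^(-p))
            * ((Z / Real.sqrt d)^α) := by rw [e3]
      _ ≤ (cAlpha d α * Real.sin (π/8)^2 * (Real.sqrt d * 3)^(-p))
            * (((n:ℝ)/(k:ℝ))^α) := mul_le_mul_of_nonneg_left hstep hA0.le
      _ = (n:ℝ)^α * (cAlpha d α * (Real.sin (π/8)^2 * (Real.sqrt d * 3)^(-p)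
            * (k:ℝ)^(-α))) := by rw [e4]; ring
      _ ≤ (n:ℝ)^α * lamEig d α n w :=
          mul_le_mul_of_nonneg_left hlam (Real.rpow_nonneg hn0.le _)
  have hCZ : 0 < c₀ * Z^α := mul_pos hc₀0 (Real.rpow_pos_of_pos hZ0 α)
  have hsq : (c₀ * Z^α)^2 ≤ ((n:ℝ)^α * lamEig d α n w)^2 :=
    pow_le_pow_left₀ hCZ.le hmain 2
  have hZ2 : (c₀ * Z^α)^2 = c₀^2 * Z^(2*α) := by
    rw [mul_pow]
    congr 1
    rw [← Real.rpow_natCast (Z^α) 2, ← Real.rpow_mul hZ0.le, mul_comm]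
    norm_num
  calc 1 / ((n:ℝ)^α * lamEig d α n w)^2
      ≤ 1 / (c₀ * Z^α)^2 := one_div_le_one_div_of_le (by positivity) hsq
    _ = 1 / (c₀^2 * Z^(2*α)) := by rw [hZ2]
    _ = (1/c₀^2) / Z^(2*α) := (div_div 1 _ _).symm
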